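/- Let b, c, s₁ be complex constants with b ≠ 0 and c ≠ 0, and let k, c₁ ∈ ℂ satisfy k² = 3b/2 and c₁² = −54b³. Set s₂ = s₁² + (11/10)(bc)² and s₃ = s₁(s₁² + (33/10)(bc)²). Then the function u(z) = s₁ − (4cc₁k/(3b)) · (1 − tanh²(kz)) tanh(kz) / (1 + tanh²(kz))² satisfies equation (E) with K = 0, at every z ∈ ℂ where cosh(kz) ≠ 0 and 1 + tanh²(kz) ≠ 0. -/

import Mathlib

open Complex Filter Topology

noncomputable section

/-- Equation (E) with first integral value `K`, at the point `z`. -/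
def SatisfiesE (b c K s₁ s₂ s₃ : ℂ) (u : ℂ → ℂ) (z : ℂ) : Prop :=
  deriv u z * iteratedDeriv 3 u z - (1/2) * (iteratedDeriv 2 u z)^2
    + 30 * b * (deriv u z)^2
    - (30 / c^2) * ((u z)^4 - 4*s₁*(u z)^3 + 6*s₂*(u z)^2 - 4*s₃*(u z)
        + 3*s₁^4 - 6*s₁^2*s₂ + 4*s₁*s₃) = K

/-! ### Auxiliary functions: the solution and its first three derivatives,
written in terms of `sinh (k z)`, `cosh (k z)` and `D = 2 cosh²(k z) − 1 = cosh (2 k z)`. -/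

def Vf (s₁ A k : ℂ) : ℂ → ℂ := fun s =>
  s₁ - A * (Complex.sinh (k*s) * Complex.cosh (k*s)) / (2 * Complex.cosh (k*s)^2 - 1)^2

def V1f (A k : ℂ) : ℂ → ℂ := fun s =>
  (-(A*k)) * ((-4) * Complex.cosh (k*s)^4 + 4 * Complex.cosh (k*s)^2 + 1) /
    (2 * Complex.cosh (k*s)^2 - 1)^3

def V2f (A k : ℂ) : ℂ → ℂ := fun s =>
  (-(4*A*k^2)) * (Complex.sinh (k*s) * Complex.cosh (k*s) *
      ((2 * Complex.cosh (k*s)^2 - 1)^2 - 6)) /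
    (2 * Complex.cosh (k*s)^2 - 1)^4

def V3f (A k : ℂ) : ℂ → ℂ := fun s =>
  (-(4*A*k^3)) * (20 * (2 * Complex.cosh (k*s)^2 - 1)^2 -
      (2 * Complex.cosh (k*s)^2 - 1)^4 - 24) /
    (2 * Complex.cosh (k*s)^2 - 1)^5

lemma hasDerivAt_kmul (k t : ℂ) : HasDerivAt (fun s : ℂ => k*s) k t := by
  simpa using (hasDerivAt_id t).const_mul k

lemma sinh_sq_eq (w : ℂ) : Complex.sinh w ^ 2 = Complex.cosh w ^ 2 - 1 := by
  linear_combination - Complex.cosh_sq_sub_sinh_sq w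

lemma hasDerivAt_Vf (s₁ A k t : ℂ) (hD : 2 * Complex.cosh (k*t)^2 - 1 ≠ 0) :
    HasDerivAt (Vf s₁ A k) (V1f A k t) t := by
  have hkt := hasDerivAt_kmul k t
  have hs := hkt.csinh
  have hc := hkt.ccosh
  have hden := (((hc.pow 2).const_mul 2).sub_const 1).pow 2
  have h := (((hs.mul hc).const_mul A).div hden (pow_ne_zero 2 hD)).const_sub s₁
  refine h.congr_deriv ?_
  simp only [V1f]
  have hS2 := sinh_sq_eq (k*t)
  simp only [Pi.pow_apply, Pi.mul_apply, Pi.add_apply, Nat.cast_ofNat]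
  have hD' : Complex.cosh (k*t)^2*2 - 1 ≠ 0 := by rwa [mul_comm] at hD
  norm_num
  field_simp
  ring_nf
  rw [hS2]
  ring

lemma hasDerivAt_V1f (A k t : ℂ) (hD : 2 * Complex.cosh (k*t)^2 - 1 ≠ 0) :
    HasDerivAt (V1f A k) (V2f A k t) t := by
  have hkt := hasDerivAt_kmul k t
  have hs := hkt.csinh
  have hc := hkt.ccosh
  have hnum := ((((hc.pow 4).const_mul (-4)).add ((hc.pow 2).const_mul 4)).add_const 1).const_mul (-(A*k))
  have hden := (((hc.pow 2).const_mul 2).sub_const 1).pow 3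
  have h := hnum.div hden (pow_ne_zero 3 hD)
  refine h.congr_deriv ?_
  simp only [V2f]
  simp only [Pi.pow_apply, Pi.mul_apply, Pi.add_apply, Nat.cast_ofNat]
  have hD' : Complex.cosh (k*t)^2*2 - 1 ≠ 0 := by rwa [mul_comm] at hD
  norm_num
  field_simp
  ring_nf

lemma hasDerivAt_V2f (A k t : ℂ) (hD : 2 * Complex.cosh (k*t)^2 - 1 ≠ 0) :
    HasDerivAt (V2f A k) (V3f A k t) t := by
  have hkt := hasDerivAt_kmul k t
  have hs := hkt.csinh
  have hc := hkt.ccosh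
  have hDch := ((hc.pow 2).const_mul 2).sub_const 1
  have hnum := (((hs.mul hc).mul ((hDch.pow 2).sub_const 6)).const_mul (-(4*A*k^2)))
  have hden := hDch.pow 4
  have h := hnum.div hden (pow_ne_zero 4 hD)
  refine h.congr_deriv ?_
  simp only [V3f]
  simp only [Pi.pow_apply, Pi.mul_apply, Pi.add_apply, Nat.cast_ofNat]
  have hD' : Complex.cosh (k*t)^2*2 - 1 ≠ 0 := by rwa [mul_comm] at hD
  norm_num
  field_simp
  ring_nf
  rw [sinh_sq_eq (k*t)]
  ring

set_option maxHeartbeats 2000000 in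
/-- The key algebraic identity behind equation (E), stated for abstract
`D` (playing the role of `cosh (2kz)`) and `P` (playing the role of
`sinh (kz) cosh (kz)`). -/
lemma core_algebra (b c s₁ A k D P : ℂ) (hb : b ≠ 0) (hc : c ≠ 0)
    (hk : k ^ 2 = 3 * b / 2) (hA2 : A ^ 2 = -144 * b ^ 2 * c ^ 2)
    (hA4 : A ^ 4 = 20736 * b ^ 4 * c ^ 4)
    (hP2 : 4 * P ^ 2 = D ^ 2 - 1) (hD : D ≠ 0) :
    -(A*k) * (2 - D^2) / D^3 * (-(4*A*k^3) * (20*D^2 - D^4 - 24) / D^5)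
      - 1/2 * (-(4*A*k^2) * (P*(D^2 - 6)) / D^4)^2
      + 30*b*(-(A*k) * (2 - D^2) / D^3)^2
      - 30/c^2 * ((s₁ - A*P/D^2)^4
          - 4*s₁*(s₁ - A*P/D^2)^3
          + 6*(s₁^2 + 11/10*(b*c)^2)*(s₁ - A*P/D^2)^2
          - 4*(s₁*(s₁^2 + 33/10*(b*c)^2))*(s₁ - A*P/D^2)
          + 3*s₁^4 - 6*s₁^2*(s₁^2 + 11/10*(b*c)^2)
          + 4*s₁*(s₁*(s₁^2 + 33/10*(b*c)^2))) = 0 := by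
  have hc2 : c^2 ≠ 0 := pow_ne_zero 2 hc
  have hden : c^2 * D^8 ≠ 0 := mul_ne_zero hc2 (pow_ne_zero 8 hD)
  have L1 : -(A*k) * (2 - D^2) / D^3 * (-(4*A*k^3) * (20*D^2 - D^4 - 24) / D^5)
      = (4*A^2*k^4*(2 - D^2)*(20*D^2 - D^4 - 24)*c^2) / (c^2 * D^8) := by
    field_simp
  have L2 : 1/2 * (-(4*A*k^2) * (P*(D^2 - 6)) / D^4)^2
      = (8*A^2*k^4*P^2*(D^2 - 6)^2*c^2) / (c^2 * D^8) := by
    field_simp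
    ring
  have L3 : 30*b*(-(A*k) * (2 - D^2) / D^3)^2
      = (30*b*A^2*k^2*(2 - D^2)^2*D^2*c^2) / (c^2 * D^8) := by
    field_simp
  have hQ : (s₁ - A*P/D^2)^4
          - 4*s₁*(s₁ - A*P/D^2)^3
          + 6*(s₁^2 + 11/10*(b*c)^2)*(s₁ - A*P/D^2)^2
          - 4*(s₁*(s₁^2 + 33/10*(b*c)^2))*(s₁ - A*P/D^2)
          + 3*s₁^4 - 6*s₁^2*(s₁^2 + 11/10*(b*c)^2)
          + 4*s₁*(s₁*(s₁^2 + 33/10*(b*c)^2))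
      = ((s₁*D^2 - A*P)^4 - 4*s₁*(s₁*D^2 - A*P)^3*D^2
          + 6*(s₁^2 + 11/10*(b*c)^2)*(s₁*D^2 - A*P)^2*D^4
          - 4*(s₁*(s₁^2 + 33/10*(b*c)^2))*(s₁*D^2 - A*P)*D^6
          + (3*s₁^4 - 6*s₁^2*(s₁^2 + 11/10*(b*c)^2)
            + 4*s₁*(s₁*(s₁^2 + 33/10*(b*c)^2)))*D^8) / D^8 := by
    have hD2 : (D:ℂ)^2 ≠ 0 := pow_ne_zero 2 hD
    have hD8 : (D:ℂ)^8 ≠ 0 := pow_ne_zero 8 hD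
    have hw : s₁ - A*P/D^2 = (s₁*D^2 - A*P)/D^2 := by field_simp
    have e4 : ((s₁*D^2-A*P)^4)/((D^2)^4) = ((s₁*D^2-A*P)^4)/D^8 := by
      rw [div_eq_div_iff (pow_ne_zero 4 hD2) hD8]; ring
    have e3 : ((s₁*D^2-A*P)^3)/((D^2)^3) = ((s₁*D^2-A*P)^3*D^2)/D^8 := by
      rw [div_eq_div_iff (pow_ne_zero 3 hD2) hD8]; ring
    have e2 : ((s₁*D^2-A*P)^2)/((D^2)^2) = ((s₁*D^2-A*P)^2*D^4)/D^8 := by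
      rw [div_eq_div_iff (pow_ne_zero 2 hD2) hD8]; ring
    have e1 : ((s₁*D^2-A*P))/(D^2) = ((s₁*D^2-A*P)*D^6)/D^8 := by
      rw [div_eq_div_iff hD2 hD8]; ring
    have k1 : 3*s₁^4 = 3*s₁^4*D^8/D^8 := (mul_div_cancel_right₀ _ hD8).symm
    have k2 : 6*s₁^2*(s₁^2 + 11/10*(b*c)^2)
        = 6*s₁^2*(s₁^2 + 11/10*(b*c)^2)*D^8/D^8 := (mul_div_cancel_right₀ _ hD8).symm
    have k3 : 4*s₁*(s₁*(s₁^2 + 33/10*(b*c)^2))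
        = 4*s₁*(s₁*(s₁^2 + 33/10*(b*c)^2))*D^8/D^8 := (mul_div_cancel_right₀ _ hD8).symm
    conv_lhs => rw [hw, div_pow, div_pow, div_pow, e4, e3, e2, e1,
      ← mul_div_assoc, ← mul_div_assoc, ← mul_div_assoc, k1, k2, k3]
    rw [div_sub_div_same, ← add_div, div_sub_div_same, ← add_div,
      div_sub_div_same, ← add_div]
    rw [div_eq_div_iff hD8 hD8]
    ring
  have L4 : 30/c^2 * ((s₁ - A*P/D^2)^4
          - 4*s₁*(s₁ - A*P/D^2)^3
          + 6*(s₁^2 + 11/10*(b*c)^2)*(s₁ - A*P/D^2)^2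
          - 4*(s₁*(s₁^2 + 33/10*(b*c)^2))*(s₁ - A*P/D^2)
          + 3*s₁^4 - 6*s₁^2*(s₁^2 + 11/10*(b*c)^2)
          + 4*s₁*(s₁*(s₁^2 + 33/10*(b*c)^2)))
      = (30*((s₁*D^2 - A*P)^4 - 4*s₁*(s₁*D^2 - A*P)^3*D^2
          + 6*(s₁^2 + 11/10*(b*c)^2)*(s₁*D^2 - A*P)^2*D^4
          - 4*(s₁*(s₁^2 + 33/10*(b*c)^2))*(s₁*D^2 - A*P)*D^6
          + (3*s₁^4 - 6*s₁^2*(s₁^2 + 11/10*(b*c)^2)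
            + 4*s₁*(s₁*(s₁^2 + 33/10*(b*c)^2)))*D^8)) / (c^2 * D^8) := by
    rw [hQ, div_mul_div_comm]
  rw [L1, L2, L3, L4, div_sub_div_same, ← add_div, div_sub_div_same,
    div_eq_zero_iff]
  left
  have hP2' : P^2 = (D^2-1)/4 := by linear_combination hP2/4
  have hP4 : P^4 = (D^2-1)^2/16 := by
    rw [show (4:ℕ) = 2*2 from rfl, pow_mul, hP2']; ring
  have hK4 : k^4 = 9*b^2/4 := by linear_combination (k^2 + 3*b/2)*hk
  ring_nf
  simp only [hK4, hk, hA4, hA2, hP4, hP2']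
  ring

set_option maxHeartbeats 2000000 in
/-- The degenerate (trigonometric) solution coming from the two-series subequation:
`u(z) = s₁ − (4cc₁k/(3b)) (1 − tanh²(kz)) tanh(kz) / (1 + tanh²(kz))²`
satisfies equation (E) with `K = 0`. -/
theorem tanh_solution_two_series
    (b c s₁ s₂ s₃ k c₁ : ℂ) (hb : b ≠ 0) (hc : c ≠ 0)
    (hk : k^2 = 3*b/2) (hc₁ : c₁^2 = -54*b^3)
    (hs₂ : s₂ = s₁^2 + (11/10)*(b*c)^2)
    (hs₃ : s₃ = s₁ * (s₁^2 + (33/10)*(b*c)^2)) :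
    ∀ z : ℂ, Complex.cosh (k*z) ≠ 0 → 1 + Complex.tanh (k*z)^2 ≠ 0 →
      SatisfiesE b c 0 s₁ s₂ s₃
        (fun t => s₁ - (4*c*c₁*k/(3*b)) *
          ((1 - Complex.tanh (k*t)^2) * Complex.tanh (k*t)) /
            (1 + Complex.tanh (k*t)^2)^2) z := by
  intro z hcz hdz
  have e1 : ∀ t : ℂ, Complex.cosh (k*t) ≠ 0 →
      1 + Complex.tanh (k*t)^2 = (2 * Complex.cosh (k*t)^2 - 1) / Complex.cosh (k*t)^2 := by
    intro t hC
    rw [Complex.tanh_eq_sinh_div_cosh, div_pow]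
    field_simp
    linear_combination - Complex.cosh_sq_sub_sinh_sq (k*t)
  have e2 : ∀ t : ℂ, Complex.cosh (k*t) ≠ 0 →
      1 - Complex.tanh (k*t)^2 = 1 / Complex.cosh (k*t)^2 := by
    intro t hC
    rw [Complex.tanh_eq_sinh_div_cosh, div_pow]
    field_simp
    exact Complex.cosh_sq_sub_sinh_sq (k*t)
  have hDz : 2 * Complex.cosh (k*z)^2 - 1 ≠ 0 := by
    intro h0
    apply hdz
    rw [e1 z hcz, h0, zero_div]
  have key : ∀ (Aq S C X : ℂ), C ≠ 0 → X ≠ 0 →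
      s₁ - Aq * ((1/C^2) * (S/C)) / (X/C^2)^2 = s₁ - Aq * (S*C) / X^2 := by
    intro Aq S C X hC hX
    field_simp
  set u : ℂ → ℂ := fun t => s₁ - (4*c*c₁*k/(3*b)) *
      ((1 - Complex.tanh (k*t)^2) * Complex.tanh (k*t)) /
        (1 + Complex.tanh (k*t)^2)^2 with hu
  set U : Set ℂ := {t | Complex.cosh (k*t) ≠ 0 ∧ 2 * Complex.cosh (k*t)^2 - 1 ≠ 0} with hUdef
  have hopen : IsOpen U := by
    have h1 : Continuous fun t : ℂ => Complex.cosh (k*t) := by fun_prop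
    have h2 : Continuous fun t : ℂ => 2 * Complex.cosh (k*t)^2 - 1 := by fun_prop
    exact (isOpen_compl_singleton.preimage h1).inter (isOpen_compl_singleton.preimage h2)
  have hzU : z ∈ U := ⟨hcz, hDz⟩
  have hEq : Set.EqOn u (Vf s₁ (4*c*c₁*k/(3*b)) k) U := by
    intro t ht
    have h1 : Complex.cosh (k*t) ≠ 0 := ht.1
    have h2 : 2 * Complex.cosh (k*t)^2 - 1 ≠ 0 := ht.2
    simp only [hu, Vf]
    rw [e2 t h1, e1 t h1, Complex.tanh_eq_sinh_div_cosh]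
    exact key _ _ _ _ h1 h2
  have hd1 : ∀ t ∈ U, deriv u t = V1f (4*c*c₁*k/(3*b)) k t := fun t ht =>
    (Filter.eventuallyEq_of_mem (hopen.mem_nhds ht) hEq).deriv_eq.trans
      (hasDerivAt_Vf s₁ _ k t ht.2).deriv
  have h2eq : iteratedDeriv 2 u = deriv (deriv u) := by
    rw [show (2:ℕ) = 1+1 from rfl, iteratedDeriv_succ, iteratedDeriv_one]
  have h3eq : iteratedDeriv 3 u = deriv (iteratedDeriv 2 u) := by
    rw [show (3:ℕ) = 2+1 from rfl, iteratedDeriv_succ]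
  have hd2 : ∀ t ∈ U, iteratedDeriv 2 u t = V2f (4*c*c₁*k/(3*b)) k t := by
    intro t ht
    rw [h2eq]
    exact (Filter.eventuallyEq_of_mem (hopen.mem_nhds ht)
      (fun s hs => hd1 s hs)).deriv_eq.trans (hasDerivAt_V1f _ k t ht.2).deriv
  have hd3 : iteratedDeriv 3 u z = V3f (4*c*c₁*k/(3*b)) k z := by
    rw [h3eq]
    exact (Filter.eventuallyEq_of_mem (hopen.mem_nhds hzU)
      (fun s hs => hd2 s hs)).deriv_eq.trans (hasDerivAt_V2f _ k z hDz).deriv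
  simp only [SatisfiesE]
  rw [hd1 z hzU, hd2 z hzU, hd3, hEq hzU, hs₂, hs₃]
  simp only [Vf, V1f, V2f, V3f]
  have h3b : (3:ℂ)*b ≠ 0 := mul_ne_zero (by norm_num) hb
  have hA2 : (4*c*c₁*k/(3*b))^2 = -144*b^2*c^2 := by
    rw [div_pow, div_eq_iff (pow_ne_zero 2 h3b)]
    linear_combination (16*c^2*k^2)*hc₁ + (16*c^2*(-54*b^3))*hk
  have hA4 : (4*c*c₁*k/(3*b))^4 = 20736*b^4*c^4 := by
    rw [show (4:ℕ) = 2*2 from rfl, pow_mul, hA2]; ring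
  have hP2 : 4*(Complex.sinh (k*z)*Complex.cosh (k*z))^2
      = (2*Complex.cosh (k*z)^2 - 1)^2 - 1 := by
    rw [mul_pow, sinh_sq_eq (k*z)]; ring
  linear_combination core_algebra b c s₁ (4*c*c₁*k/(3*b)) k
    (2*Complex.cosh (k*z)^2 - 1) (Complex.sinh (k*z)*Complex.cosh (k*z))
    hb hc hk hA2 hA4 hP2 hDz

end
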